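/- Let A be an abelian group with the degree-s filtration A = A_0 = A_1 = ... = A_s ⊇ A_{s+1} = {0}. A configuration c : {0,1}^{s+1} → A lies in HK^{s+1}(A_•) if and only if the alternating sum ∑_{ω ∈ {0,1}^{s+1}} (−1)^{|ω|} c(ω) equals 0, where |ω| is the number of coordinates of ω equal to 1. -/

import Mathlib

open Subgroup

/-- A filtration on a group `G`: a chain `G = G₀ ⊇ G₁ ⊇ ...` of subgroups with
`[Gᵢ, Gⱼ] ⊆ G_{i+j}` for all `i j`. -/
structure IsGroupFiltration {G : Type*} [Group G] (Gf : ℕ → Subgroup G) : Prop where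
  top : Gf 0 = ⊤
  mono : ∀ i, Gf (i + 1) ≤ Gf i
  comm : ∀ i j, ⁅Gf i, Gf j⁆ ≤ Gf (i + j)

/-- The top vertex `(1,…,1)` of the discrete cube `{0,1}^k`. -/
def topVert (k : ℕ) : Fin k → Bool := fun _ => true

/-- The configuration `[x]_{F_S}`: equal to `x` on the upper face `F_S = {ω : ω ⊇ S}`
and the identity elsewhere. -/
def upperFaceConfig {G : Type*} [Group G] {k : ℕ} (S : Finset (Fin k)) (x : G) :
    (Fin k → Bool) → G :=
  fun ω => if ∀ i ∈ S, ω i = true then x else 1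

/-- The Host–Kra cube group `HK^k(G_•)`: the subgroup of `G^{{0,1}^k}` generated by the
configurations `[x]_{F_S}` with `x ∈ G_{|S|}`. -/
def hostKra {G : Type*} [Group G] (Gf : ℕ → Subgroup G) (k : ℕ) :
    Subgroup ((Fin k → Bool) → G) :=
  Subgroup.closure { c | ∃ (S : Finset (Fin k)) (x : G), x ∈ Gf S.card ∧ c = upperFaceConfig S x }

/-! ### Auxiliary material -/

private lemma zpow_sum' {A : Type*} [CommGroup A] (x : A) {ι : Type*} (s : Finset ι)
    (f : ι → ℤ) : x ^ (∑ i ∈ s, f i) = ∏ i ∈ s, x ^ f i := by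
  classical
  induction s using Finset.induction with
  | empty => simp
  | insert _ _ h ih => rw [Finset.sum_insert h, Finset.prod_insert h, zpow_add, ih]

/-- The equivalence between vertices of the cube and subsets of coordinates. -/
private def vertEquiv (k : ℕ) : (Fin k → Bool) ≃ Finset (Fin k) where
  toFun ω := Finset.univ.filter fun i => ω i = true
  invFun S := fun i => decide (i ∈ S)
  left_inv ω := by funext i; by_cases h : ω i <;> simp [h]
  right_inv S := by ext i; simp

private lemma sum_sandwich {α : Type*} [DecidableEq α] (T W : Finset α) (hTW : T ⊆ W) :
    (∑ S ∈ W.powerset.filter (fun S => T ⊆ S), (-1 : ℤ) ^ (S \ T).card)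
      = if T = W then 1 else 0 := by
  classical
  have key : (∑ S ∈ W.powerset.filter (fun S => T ⊆ S), (-1 : ℤ) ^ (S \ T).card)
      = ∑ R ∈ (W \ T).powerset, (-1 : ℤ) ^ R.card := by
    refine Finset.sum_bij' (fun S _ => S \ T) (fun R _ => R ∪ T) ?_ ?_ ?_ ?_ ?_
    · intro S hS
      rw [Finset.mem_filter, Finset.mem_powerset] at hS
      rw [Finset.mem_powerset]
      exact Finset.sdiff_subset_sdiff hS.1 le_rfl
    · intro R hR
      rw [Finset.mem_powerset] at hR
      rw [Finset.mem_filter, Finset.mem_powerset]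
      exact ⟨Finset.union_subset (hR.trans (Finset.sdiff_subset)) hTW, Finset.subset_union_right⟩
    · intro S hS
      rw [Finset.mem_filter] at hS
      show S \ T ∪ T = S
      rw [Finset.sdiff_union_self_eq_union, Finset.union_eq_left.mpr hS.2]
    · intro R hR
      rw [Finset.mem_powerset] at hR
      show (R ∪ T) \ T = R
      rw [Finset.union_sdiff_right, Finset.sdiff_eq_self_iff_disjoint]
      exact Finset.disjoint_of_subset_left hR Finset.sdiff_disjoint
    · intro S hS; rfl
  rw [key, Finset.sum_powerset_neg_one_pow_card]
  by_cases h : T = W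
  · subst h; simp
  · rw [if_neg h, if_neg fun hE =>
      h (Finset.Subset.antisymm hTW (Finset.sdiff_eq_empty_iff_subset.mp hE))]

private lemma sum_filter_pow_card {α : Type*} [Fintype α] [DecidableEq α] (S : Finset α)
    (hS : S ≠ Finset.univ) :
    (∑ W ∈ Finset.univ.filter (fun W => S ⊆ W), (-1 : ℤ) ^ W.card) = 0 := by
  have h1 : (Finset.univ : Finset (Finset α)) = (Finset.univ : Finset α).powerset :=
    Finset.powerset_univ.symm
  rw [h1]
  have h2 : (∑ W ∈ (Finset.univ : Finset α).powerset.filter (fun W => S ⊆ W),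
      (-1 : ℤ) ^ W.card)
      = ∑ W ∈ (Finset.univ : Finset α).powerset.filter (fun W => S ⊆ W),
        (-1 : ℤ) ^ S.card * (-1 : ℤ) ^ (W \ S).card := by
    refine Finset.sum_congr rfl fun W hW => ?_
    rw [Finset.mem_filter] at hW
    rw [← pow_add]
    congr 1
    have := Finset.card_sdiff_add_card_eq_card hW.2
    omega
  rw [h2, ← Finset.mul_sum, sum_sandwich S Finset.univ (Finset.subset_univ S), if_neg hS,
    mul_zero]

/-- Möbius inversion over the boolean lattice, multiplicatively. -/
private lemma mobius_prod {A : Type*} [CommGroup A] {α : Type*} [DecidableEq α]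
    (f : Finset α → A) (W : Finset α) :
    (∏ S ∈ W.powerset, ∏ T ∈ S.powerset, f T ^ ((-1 : ℤ) ^ (S \ T).card)) = f W := by
  rw [Finset.prod_comm' (s' := fun T => W.powerset.filter (fun S => T ⊆ S))
    (t' := W.powerset) ?_]
  · calc (∏ T ∈ W.powerset, ∏ S ∈ W.powerset.filter (fun S => T ⊆ S),
          f T ^ ((-1 : ℤ) ^ (S \ T).card))
        = ∏ T ∈ W.powerset, f T ^ (if T = W then (1 : ℤ) else 0) := by
          refine Finset.prod_congr rfl fun T hT => ?_
          rw [Finset.mem_powerset] at hT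
          rw [← sum_sandwich T W hT, zpow_sum']
      _ = f W := by
          rw [Finset.prod_eq_single W (fun T _ hT => by rw [if_neg hT, zpow_zero])
            (fun h => absurd (Finset.mem_powerset_self W) h)]
          rw [if_pos rfl, zpow_one]
  · intro S T
    simp only [Finset.mem_powerset, Finset.mem_filter]
    constructor
    · rintro ⟨h1, h2⟩; exact ⟨⟨h1, h2⟩, h2.trans h1⟩
    · rintro ⟨⟨h1, h2⟩, _⟩; exact ⟨h1, h2⟩

/-- The alternating product homomorphism. -/
private def altHom (A : Type*) [CommGroup A] (k : ℕ) : ((Fin k → Bool) → A) →* A where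
  toFun c := ∏ ω : Fin k → Bool,
    c ω ^ ((-1 : ℤ) ^ (Finset.univ.filter fun i => ω i = true).card)
  map_one' := by simp
  map_mul' c d := by
    rw [← Finset.prod_mul_distrib]
    exact Finset.prod_congr rfl fun ω _ => by simp [mul_zpow]

private lemma altHom_apply {A : Type*} [CommGroup A] {k : ℕ} (c : (Fin k → Bool) → A) :
    altHom A k c = ∏ ω : Fin k → Bool,
      c ω ^ ((-1 : ℤ) ^ (Finset.univ.filter fun i => ω i = true).card) := rfl

private lemma filter_vertEquiv_symm {k : ℕ} (W : Finset (Fin k)) :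
    (Finset.univ.filter fun i => (vertEquiv k).symm W i = true) = W := by
  ext i; simp [vertEquiv]

/-- The alternating product expressed as a product over subsets. -/
private lemma altHom_eq_prod_finset {A : Type*} [CommGroup A] {k : ℕ}
    (c : (Fin k → Bool) → A) :
    altHom A k c = ∏ W : Finset (Fin k),
      c ((vertEquiv k).symm W) ^ ((-1 : ℤ) ^ W.card) := by
  rw [altHom_apply, ← Equiv.prod_comp (vertEquiv k).symm]
  exact Finset.prod_congr rfl fun W _ => by rw [filter_vertEquiv_symm]

private lemma upperFaceConfig_vertEquiv_symm {G : Type*} [Group G] {k : ℕ}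
    (S W : Finset (Fin k)) (x : G) :
    upperFaceConfig S x ((vertEquiv k).symm W) = if S ⊆ W then x else 1 := by
  unfold upperFaceConfig vertEquiv
  congr 1
  simp [Finset.subset_iff]

/-- The forward inclusion: `HK^(s+1)` is contained in the kernel of the alternating product. -/
private lemma hostKra_le_ker {A : Type*} [CommGroup A] (s : ℕ) :
    hostKra (fun i => if i ≤ s then (⊤ : Subgroup A) else ⊥) (s + 1)
      ≤ (altHom A (s + 1)).ker := by
  rw [hostKra, Subgroup.closure_le]
  rintro g ⟨S, x, hx, rfl⟩
  simp only [SetLike.mem_coe, MonoidHom.mem_ker]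
  by_cases hS : S = Finset.univ
  · subst hS
    have hcard : ¬ ((Finset.univ : Finset (Fin (s + 1))).card ≤ s) := by
      simp [Finset.card_univ]
    rw [if_neg hcard, Subgroup.mem_bot] at hx
    subst hx
    have : upperFaceConfig (Finset.univ : Finset (Fin (s + 1))) (1 : A) = 1 := by
      funext ω
      simp [upperFaceConfig]
    rw [this, map_one]
  · rw [altHom_eq_prod_finset]
    calc (∏ W : Finset (Fin (s + 1)),
          upperFaceConfig S x ((vertEquiv (s + 1)).symm W) ^ ((-1 : ℤ) ^ W.card))
        = ∏ W : Finset (Fin (s + 1)), (if S ⊆ W then x ^ ((-1 : ℤ) ^ W.card) else 1) := by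
          refine Finset.prod_congr rfl fun W _ => ?_
          rw [upperFaceConfig_vertEquiv_symm]
          split <;> simp
      _ = ∏ W ∈ Finset.univ.filter (fun W => S ⊆ W), x ^ ((-1 : ℤ) ^ W.card) := by
          rw [Finset.prod_filter]
      _ = x ^ (∑ W ∈ Finset.univ.filter (fun W => S ⊆ W), (-1 : ℤ) ^ W.card) := by
          rw [zpow_sum']
      _ = 1 := by rw [sum_filter_pow_card S hS, zpow_zero]

/-- For an abelian group `A` with the degree-`s` filtration
`A = A_0 = ⋯ = A_s ⊇ A_{s+1} = {1}`, a configuration `c : {0,1}^{s+1} → A` lies in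
`HK^{s+1}(A_•)` iff its alternating product `∏_ω c(ω)^{(-1)^{|ω|}}` is trivial. -/
theorem hostKra_degree_filtration_iff_alternating {A : Type*} [CommGroup A] (s : ℕ)
    (hs : 1 ≤ s) (c : (Fin (s + 1) → Bool) → A) :
    c ∈ hostKra (fun i => if i ≤ s then (⊤ : Subgroup A) else ⊥) (s + 1) ↔
      ∏ ω : Fin (s + 1) → Bool,
        c ω ^ ((-1 : ℤ) ^ (Finset.univ.filter fun i => ω i = true).card) = 1 := by
  classical
  constructor
  · intro hc
    exact hostKra_le_ker s hc
  · intro h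
    -- Build an element of `hostKra` agreeing with `c` away from the top vertex.
    set f : Finset (Fin (s + 1)) → A := fun T => c ((vertEquiv (s + 1)).symm T) with hf
    set xf : Finset (Fin (s + 1)) → A :=
      fun S => ∏ T ∈ S.powerset, f T ^ ((-1 : ℤ) ^ (S \ T).card) with hxf
    set d : (Fin (s + 1) → Bool) → A :=
      ∏ S ∈ Finset.univ.filter (fun S => S ≠ (Finset.univ : Finset (Fin (s + 1)))),
        upperFaceConfig S (xf S) with hd
    have hdmem : d ∈ hostKra (fun i => if i ≤ s then (⊤ : Subgroup A) else ⊥) (s + 1) := by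
      refine Subgroup.prod_mem _ fun S hS => Subgroup.subset_closure ⟨S, xf S, ?_, rfl⟩
      rw [Finset.mem_filter] at hS
      have hlt : S.card < s + 1 := by
        have := Finset.card_lt_card (Finset.ssubset_univ_iff.mpr hS.2)
        simpa [Finset.card_univ] using this
      show xf S ∈ if S.card ≤ s then (⊤ : Subgroup A) else ⊥
      rw [if_pos (by omega)]
      exact Subgroup.mem_top _
    -- d agrees with c off the top vertex
    have hagree : ∀ ω : Fin (s + 1) → Bool, ω ≠ topVert (s + 1) → d ω = c ω := by
      intro ω hω
      set W : Finset (Fin (s + 1)) := Finset.univ.filter fun i => ω i = true with hW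
      have hWne : W ≠ Finset.univ := by
        intro hWu
        apply hω
        funext i
        have : i ∈ W := hWu ▸ Finset.mem_univ i
        rw [hW, Finset.mem_filter] at this
        exact this.2
      have hωW : ω = (vertEquiv (s + 1)).symm W := ((vertEquiv (s + 1)).eq_symm_apply.mpr rfl)
      calc d ω = ∏ S ∈ Finset.univ.filter
            (fun S => S ≠ (Finset.univ : Finset (Fin (s + 1)))),
            upperFaceConfig S (xf S) ω := by rw [hd, Finset.prod_apply]
        _ = ∏ S ∈ Finset.univ.filter (fun S => S ≠ (Finset.univ : Finset (Fin (s + 1)))),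
            (if S ⊆ W then xf S else 1) := by
            refine Finset.prod_congr rfl fun S _ => ?_
            rw [hωW, upperFaceConfig_vertEquiv_symm]
        _ = ∏ S ∈ (Finset.univ.filter
            (fun S => S ≠ (Finset.univ : Finset (Fin (s + 1))))).filter (fun S => S ⊆ W),
            xf S := (Finset.prod_filter _ _).symm
        _ = ∏ S ∈ W.powerset, xf S := by
            congr 1
            ext S
            simp only [Finset.mem_filter, Finset.mem_univ, true_and, Finset.mem_powerset]
            constructor
            · rintro ⟨_, h2⟩; exact h2
            · intro hSW
              refine ⟨fun hSu => hWne ?_, hSW⟩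
              exact Finset.univ_subset_iff.mp (hSu ▸ hSW)
        _ = f W := mobius_prod f W
        _ = c ω := show c ((vertEquiv (s + 1)).symm W) = c ω by rw [← hωW]
    -- conclude c = d using the alternating relation at the top vertex
    have hdker : altHom A (s + 1) d = 1 := hostKra_le_ker s hdmem
    have hcker : altHom A (s + 1) c = 1 := h
    have hdiv : altHom A (s + 1) (c / d) = 1 := by
      rw [map_div, hcker, hdker, one_div, inv_one]
    have hprod : (∏ ω : Fin (s + 1) → Bool,
        (c / d) ω ^ ((-1 : ℤ) ^ (Finset.univ.filter fun i => ω i = true).card))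
        = ((c / d) (topVert (s + 1)))
          ^ ((-1 : ℤ) ^ (Finset.univ.filter fun i => topVert (s + 1) i = true).card) := by
      refine Fintype.prod_eq_single _ fun ω hω => ?_
      rw [Pi.div_apply, hagree ω hω, div_self', one_zpow]
    have htop0 : ((c / d) (topVert (s + 1)))
        ^ ((-1 : ℤ) ^ (Finset.univ.filter fun i => topVert (s + 1) i = true).card) = 1 := by
      rw [← hprod, ← altHom_apply]
      exact hdiv
    have htop : c (topVert (s + 1)) = d (topVert (s + 1)) := by
      set e : ℤ := (-1 : ℤ) ^ (Finset.univ.filter fun i => topVert (s + 1) i = true).card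
        with he
      have hee : e * e = 1 := by
        rw [he, ← pow_add]
        exact Even.neg_one_pow ⟨_, rfl⟩
      have : (c / d) (topVert (s + 1)) = 1 := by
        calc (c / d) (topVert (s + 1))
            = ((c / d) (topVert (s + 1))) ^ (e * e) := by rw [hee, zpow_one]
          _ = (((c / d) (topVert (s + 1))) ^ e) ^ e := by rw [zpow_mul]
          _ = 1 := by rw [htop0, one_zpow]
      rw [Pi.div_apply, div_eq_one] at this
      exact this
    have : c = d := by
      funext ω
      by_cases hω : ω = topVert (s + 1)
      · rw [hω, htop]
      · rw [hagree ω hω]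
    rw [this]
    exact hdmem
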